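/- If a univariate polynomial matrix M : ℝ → (n×n symmetric real matrices), each entry of degree at most d with d even, satisfies M(s) ⪰ 0 for all s ∈ [0,1], then ∫₀¹ M(s) ds ⪰ (1/(2(d²−1))) · M(1) in the Loewner order. -/

import Mathlib

open Polynomial

open Polynomial

noncomputable def Iv (p : ℝ[X]) : ℝ := ∫ s in (0:ℝ)..1, p.eval s

lemma Iv_intble (p : ℝ[X]) : IntervalIntegrable (fun s => p.eval s) MeasureTheory.volume 0 1 :=
  (p.continuous).intervalIntegrable 0 1

lemma Iv_add (p q : ℝ[X]) : Iv (p + q) = Iv p + Iv q := by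
  unfold Iv
  simp only [eval_add]
  exact intervalIntegral.integral_add (Iv_intble p) (Iv_intble q)

lemma Iv_smul (c : ℝ) (p : ℝ[X]) : Iv (C c * p) = c * Iv p := by
  unfold Iv
  simp only [eval_mul, eval_C]
  exact intervalIntegral.integral_const_mul c _

lemma Iv_derivative (p : ℝ[X]) : Iv (derivative p) = p.eval 1 - p.eval 0 := by
  unfold Iv
  apply intervalIntegral.integral_deriv_eq_sub' (fun x => p.eval x)
  · funext x; exact p.deriv
  · intro x _; exact p.differentiable.differentiableAt
  · exact ((derivative p).continuous).continuousOn

lemma Iv_nonneg {p : ℝ[X]} (h : ∀ s ∈ Set.Icc (0:ℝ) 1, 0 ≤ p.eval s) : 0 ≤ Iv p :=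
  intervalIntegral.integral_nonneg zero_le_one h

lemma Iv_mono {p q : ℝ[X]} (h : ∀ s ∈ Set.Icc (0:ℝ) 1, p.eval s ≤ q.eval s) : Iv p ≤ Iv q :=
  intervalIntegral.integral_mono_on zero_le_one (Iv_intble p) (Iv_intble q) h

lemma Iv_sum {ι : Type*} (s : Finset ι) (f : ι → ℝ[X]) : Iv (∑ i ∈ s, f i) = ∑ i ∈ s, Iv (f i) := by
  classical
  induction s using Finset.induction with
  | empty => simp [Iv]
  | insert a s h ih => rw [Finset.sum_insert h, Iv_add, ih, Finset.sum_insert h]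

-- integration by parts
lemma Iv_ibp (u v : ℝ[X]) :
    Iv (derivative u * v) + Iv (u * derivative v) = (u*v).eval 1 - (u*v).eval 0 := by
  rw [← Iv_add, ← derivative_mul, Iv_derivative]

lemma Iv_X_pow (a : ℕ) : Iv (X^a : ℝ[X]) = 1 / (a+1) := by
  have h : derivative ((X:ℝ[X])^(a+1)) = C ((a:ℝ)+1) * X^a := by
    rw [derivative_X_pow]; push_cast; ring_nf
  have := Iv_derivative ((X:ℝ[X])^(a+1))
  rw [h, Iv_smul] at this
  simp at this
  have ha : ((a:ℝ)+1) ≠ 0 := by positivity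
  field_simp
  linarith [this]

lemma Iv_beta (a b : ℕ) :
    Iv ((X:ℝ[X])^a * (1 - X)^b) =
      (Nat.factorial a * Nat.factorial b : ℝ) / (Nat.factorial (a+b+1)) := by
  induction b generalizing a with
  | zero =>
    rw [show ((1:ℝ[X]) - X)^0 = 1 by ring, mul_one, Iv_X_pow]
    rw [show a+0+1 = a+1 by omega, Nat.factorial_succ]
    push_cast
    rw [eq_div_iff (by positivity)]
    field_simp
    simp
  | succ b ih =>
    have key := Iv_ibp ((1 - X : ℝ[X])^(b+1)) (X^(a+1))
    have e1 : derivative ((1 - X : ℝ[X])^(b+1)) = C (-((b:ℝ)+1)) * (1-X)^b := by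
      rw [derivative_pow]
      simp [derivative_X]
      push_cast; ring_nf
    have e2 : derivative ((X:ℝ[X])^(a+1)) = C ((a:ℝ)+1) * X^a := by
      rw [derivative_X_pow]; push_cast; ring_nf
    rw [e1, e2] at key
    have e3 : (C (-((b:ℝ)+1)) * (1-X)^b) * X^(a+1) = C (-((b:ℝ)+1)) * (X^(a+1) * (1-X)^b) := by ring
    have e4 : (1 - X:ℝ[X])^(b+1) * (C ((a:ℝ)+1) * X^a) = C ((a:ℝ)+1) * (X^a * (1-X)^(b+1)) := by ring
    rw [e3, e4, Iv_smul, Iv_smul] at key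
    have e5 : (((1 - X:ℝ[X])^(b+1) * X^(a+1)).eval 1) = 0 := by simp
    have e6 : (((1 - X:ℝ[X])^(b+1) * X^(a+1)).eval 0) = 0 := by simp
    rw [e5, e6] at key
    have hIH := ih (a+1)
    have ha : ((a:ℝ)+1) ≠ 0 := by positivity
    have key2 : Iv ((X:ℝ[X])^a * (1-X)^(b+1)) = ((b:ℝ)+1)/((a:ℝ)+1) * Iv ((X:ℝ[X])^(a+1) * (1-X)^b) := by
      field_simp
      linarith [key]
    rw [key2, hIH, Nat.factorial_succ a, Nat.factorial_succ b]
    push_cast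
    have hq : (0:ℝ) < (Nat.factorial (a + (b+1) + 1) : ℝ) := by positivity
    field_simp
    ring



noncomputable def wP (k : ℕ) : ℝ[X] := ((X:ℝ[X])^2 - X)^k

noncomputable def Leg (k : ℕ) : ℝ[X] := C (1 / (Nat.factorial k : ℝ)) * (derivative)^[k] (wP k)

lemma wP_eq (k : ℕ) : wP k = (X - C 1)^k * (X:ℝ[X])^k := by
  unfold wP
  rw [← mul_pow]
  congr 1
  simp
  ring

-- one-step divisibility of derivative
lemma deriv_dvd {r : ℝ} {t : ℕ} {p : ℝ[X]} (h : (X - C r)^(t+1) ∣ p) :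
    (X - C r)^t ∣ derivative p := by
  obtain ⟨q, rfl⟩ := h
  have e : derivative ((X - C r)^(t+1) * q)
      = (X - C r)^t * (C ((t:ℝ)+1) * derivative (X - C r) * q + (X - C r) * derivative q) := by
    rw [derivative_mul, derivative_pow, Nat.add_sub_cancel]
    push_cast
    ring
  exact ⟨_, e⟩

lemma iter_deriv_dvd {r : ℝ} {p : ℝ[X]} {t i : ℕ} (h : (X - C r)^t ∣ p) (hi : i ≤ t) :
    (X - C r)^(t - i) ∣ (derivative)^[i] p := by
  induction i generalizing p t with
  | zero => simpa using h
  | succ i ih =>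
    rw [Function.iterate_succ_apply]
    have h2 : (X - C r)^(t-1) ∣ derivative p := by
      have := deriv_dvd (r := r) (t := t-1) (p := p) (by rwa [show t-1+1 = t by omega])
      exact this
    have := ih h2 (by omega)
    rwa [show t-1-i = t - (i+1) by omega] at this

lemma eval_iter_deriv_wP_zero {k i : ℕ} (hi : i < k) (r : ℝ) (hr : r = 0 ∨ r = 1) :
    ((derivative)^[i] (wP k)).eval r = 0 := by
  have hdvd : (X - C r)^(k - i) ∣ (derivative)^[i] (wP k) := by
    apply iter_deriv_dvd _ (le_of_lt hi)
    rcases hr with h | h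
    · subst h
      rw [wP_eq, show ((X:ℝ[X]) - C 0) = X by simp]
      exact dvd_mul_left _ _
    · subst h
      rw [wP_eq]
      exact dvd_mul_right _ _
  obtain ⟨q, hq⟩ := hdvd
  have hz : eval r ((X - C r)^(k-i)) = 0 := by
    rw [eval_pow]
    simp only [eval_sub, eval_X, eval_C, sub_self]
    exact zero_pow (by omega)
  rw [hq, eval_mul, hz, zero_mul]

lemma Iv_ibp_zero {u p : ℝ[X]} (h0 : p.eval 0 = 0) (h1 : p.eval 1 = 0) :
    Iv (u * derivative p) = - Iv (derivative u * p) := by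
  have := Iv_ibp u p
  rw [eval_mul, eval_mul, h0, h1, mul_zero, mul_zero] at this
  linarith

lemma Iv_iter_ibp (k : ℕ) (u : ℝ[X]) :
    Iv (u * (derivative)^[k] (wP k)) = (-1)^k * Iv ((derivative)^[k] u * wP k) := by
  suffices h : ∀ i ≤ k, ∀ u : ℝ[X],
      Iv (u * (derivative)^[k] (wP k)) = (-1)^i * Iv ((derivative)^[i] u * (derivative)^[k-i] (wP k)) by
    simpa using h k le_rfl u
  intro i hi
  induction i with
  | zero => intro u; simp
  | succ i ih =>
    intro u
    rw [ih (by omega) u]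
    have hstep : Iv ((derivative)^[i] u * (derivative)^[k-i] (wP k))
        = - Iv ((derivative)^[i+1] u * (derivative)^[k-(i+1)] (wP k)) := by
      have hki : k - i = (k - (i+1)) + 1 := by omega
      have : (derivative)^[k-i] (wP k) = derivative ((derivative)^[k-(i+1)] (wP k)) := by
        rw [hki, Function.iterate_succ_apply']
      rw [this, Iv_ibp_zero (eval_iter_deriv_wP_zero (by omega) 0 (Or.inl rfl))
        (eval_iter_deriv_wP_zero (by omega) 1 (Or.inr rfl)), Function.iterate_succ_apply']
    rw [hstep]
    ring

lemma monic_X2X : ((X:ℝ[X])^2 - X).Monic := by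
  apply Polynomial.monic_X_pow_sub
  simpa using Polynomial.degree_X_le.trans_lt (by norm_num)

lemma natDegree_wP (k : ℕ) : (wP k).natDegree = 2 * k := by
  unfold wP
  have h2 : ((X:ℝ[X])^2 - X).natDegree = 2 := by compute_degree!
  rw [natDegree_pow, h2, mul_comm]

lemma monic_wP (k : ℕ) : (wP k).Monic := monic_X2X.pow k

lemma natDegree_Leg (k : ℕ) : (Leg k).natDegree ≤ k := by
  unfold Leg
  apply (natDegree_mul_le).trans
  simp only [natDegree_C, zero_add]
  have := natDegree_iterate_derivative (wP k) k
  rw [natDegree_wP] at this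
  omega

lemma coeff_Leg_self (k : ℕ) :
    (Leg k).coeff k = (Nat.factorial (2*k) : ℝ) / ((Nat.factorial k : ℝ) * (Nat.factorial k : ℝ)) := by
  unfold Leg
  rw [coeff_C_mul, coeff_iterate_derivative]
  have h2k : (wP k).coeff (k + k) = 1 := by
    have := (monic_wP k)
    have hd : (wP k).natDegree = k + k := by rw [natDegree_wP]; omega
    rw [← hd]
    exact this.coeff_natDegree
  rw [h2k, nsmul_eq_mul, mul_one]
  have hkey : (Nat.factorial k) * ((k+k).descFactorial k) = Nat.factorial (2*k) := by
    have := Nat.factorial_mul_descFactorial (n := k+k) (k := k) (by omega)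
    rw [show k+k-k = k by omega] at this
    rw [this]; congr 1; omega
  have hpos : (0:ℝ) < (Nat.factorial k : ℝ) := by positivity
  have : ((k+k).descFactorial k : ℝ) = (Nat.factorial (2*k) : ℝ) / (Nat.factorial k : ℝ) := by
    rw [eq_div_iff (ne_of_gt hpos), mul_comm]
    exact_mod_cast congrArg (Nat.cast : ℕ → ℝ) hkey
  rw [this]
  field_simp

lemma Iv_zero : Iv 0 = 0 := by
  have := Iv_smul 0 0
  simpa using this

lemma eval_one_iter_deriv (j : ℕ) (h : ℝ[X]) :
    ((derivative)^[j] ((X - C 1)^j * h)).eval 1 = (Nat.factorial j : ℝ) * h.eval 1 := by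
  induction j generalizing h with
  | zero => simp
  | succ j ih =>
    rw [Function.iterate_succ_apply]
    have e : derivative ((X - C 1)^(j+1) * h)
        = (X - C 1)^j * (C ((j:ℝ)+1) * h + (X - C 1) * derivative h) := by
      rw [derivative_mul, derivative_pow, Nat.add_sub_cancel]
      simp only [derivative_sub, derivative_X, derivative_C, sub_zero, mul_one]
      push_cast
      ring
    rw [e, ih]
    simp only [eval_add, eval_mul, eval_C, eval_sub, eval_X, sub_self, zero_mul, add_zero]
    rw [Nat.factorial_succ]
    push_cast
    ring

lemma Leg_eval_one (k : ℕ) : (Leg k).eval 1 = 1 := by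
  unfold Leg
  rw [eval_mul, eval_C, wP_eq, eval_one_iter_deriv]
  simp [Nat.factorial_ne_zero]

lemma Iv_orthog {u : ℝ[X]} {k : ℕ} (h : u.natDegree < k) : Iv (u * Leg k) = 0 := by
  unfold Leg
  rw [show u * (C (1/(Nat.factorial k:ℝ)) * (derivative)^[k] (wP k))
    = C (1/(Nat.factorial k:ℝ)) * (u * (derivative)^[k] (wP k)) by ring, Iv_smul,
    Iv_iter_ibp, iterate_derivative_eq_zero h, zero_mul, Iv_zero]
  ring

lemma iter_deriv_wP_top (k : ℕ) :
    (derivative)^[2*k] (wP k) = C ((Nat.factorial (2*k) : ℝ)) := by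
  have hd : ((derivative)^[2*k] (wP k)).natDegree = 0 := by
    have := natDegree_iterate_derivative (wP k) (2*k)
    rw [natDegree_wP] at this
    omega
  have := Polynomial.eq_C_of_natDegree_le_zero (le_of_eq hd)
  rw [this, coeff_iterate_derivative]
  congr 1
  rw [zero_add, Nat.descFactorial_self]
  have : (wP k).coeff (2*k) = 1 := by
    have := (monic_wP k).coeff_natDegree
    rwa [natDegree_wP] at this
  rw [this, nsmul_eq_mul, mul_one]

lemma Iv_wP (k : ℕ) : Iv (wP k) = (-1)^k * ((Nat.factorial k * Nat.factorial k : ℝ) / (Nat.factorial (2*k+1))) := by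
  have e : wP k = C ((-1:ℝ)^k) * ((X:ℝ[X])^k * (1 - X)^k) := by
    unfold wP
    rw [C_pow, ← mul_pow, ← mul_pow]
    congr 1
    simp only [map_neg, map_one]
    ring
  rw [e, Iv_smul, Iv_beta]
  rw [show k + k + 1 = 2*k+1 by omega]

lemma Iv_Leg_sq (k : ℕ) : Iv (Leg k * Leg k) = 1 / (2*(k:ℝ)+1) := by
  unfold Leg
  rw [show (C (1/(Nat.factorial k:ℝ)) * (derivative)^[k] (wP k)) * (C (1/(Nat.factorial k:ℝ)) * (derivative)^[k] (wP k))
    = C (1/(Nat.factorial k:ℝ)) * (C (1/(Nat.factorial k:ℝ)) * ((derivative)^[k] (wP k) * (derivative)^[k] (wP k))) by ring,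
    Iv_smul, Iv_smul, Iv_iter_ibp]
  rw [← Function.iterate_add_apply, show k + k = 2*k by omega, iter_deriv_wP_top, Iv_smul, Iv_wP]
  have h1 : (Nat.factorial (2*k+1) : ℝ) = (2*(k:ℝ)+1) * (Nat.factorial (2*k)) := by
    rw [Nat.factorial_succ]; push_cast; ring
  rw [h1]
  have hk : (0:ℝ) < Nat.factorial k := by positivity
  have h2k : (0:ℝ) < Nat.factorial (2*k) := by positivity
  have h2k1 : (0:ℝ) < 2*(k:ℝ)+1 := by positivity
  field_simp
  ring_nf
  rw [show ((-1:ℝ))^(k*2) = ((-1:ℝ)^2)^k by rw [← pow_mul]; ring_nf]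
  norm_num

lemma Leg_coeff_pos (k : ℕ) : 0 < (Leg k).coeff k := by
  rw [coeff_Leg_self]
  positivity

lemma Leg_expand (m : ℕ) : ∀ p : ℝ[X], p.natDegree ≤ m →
    ∃ c : ℕ → ℝ, p = ∑ k ∈ Finset.range (m+1), C (c k) * Leg k := by
  induction m with
  | zero =>
    intro p hp
    refine ⟨fun _ => p.coeff 0 / (Leg 0).coeff 0, ?_⟩
    rw [Finset.sum_range_one]
    set l := (Leg 0).coeff 0 with hl0
    have h0 : Leg 0 = C l := Polynomial.eq_C_of_natDegree_le_zero (natDegree_Leg 0)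
    rw [h0, ← C_mul, div_mul_cancel₀ _ (ne_of_gt (Leg_coeff_pos 0))]
    exact Polynomial.eq_C_of_natDegree_le_zero hp
  | succ m ih =>
    intro p hp
    set t := p.coeff (m+1) / (Leg (m+1)).coeff (m+1) with ht
    have hq : (p - C t * Leg (m+1)).natDegree ≤ m := by
      rw [natDegree_le_iff_coeff_eq_zero]
      intro N hN
      rcases eq_or_lt_of_le (Nat.succ_le_of_lt hN) with h | h
      · rw [coeff_sub, coeff_C_mul, ← h, ht, div_mul_cancel₀ _ (ne_of_gt (Leg_coeff_pos (m+1))), sub_self]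
      · rw [coeff_sub, coeff_C_mul]
        rw [coeff_eq_zero_of_natDegree_lt (lt_of_le_of_lt hp h),
          coeff_eq_zero_of_natDegree_lt (lt_of_le_of_lt (natDegree_Leg (m+1)) h)]
        ring
    obtain ⟨c, hc⟩ := ih _ hq
    refine ⟨fun k => if k = m+1 then t else c k, ?_⟩
    rw [Finset.sum_range_succ]
    simp only [if_pos rfl]
    have : ∑ k ∈ Finset.range (m+1), C (if k = m+1 then t else c k) * Leg k
        = ∑ k ∈ Finset.range (m+1), C (c k) * Leg k := by
      apply Finset.sum_congr rfl
      intro k hk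
      rw [if_neg (by have := Finset.mem_range.mp hk; omega)]
    rw [this, ← hc]
    simp only [if_true]
    ring

lemma Iv_Leg_mul {j k : ℕ} (h : j ≠ k) : Iv (Leg j * Leg k) = 0 := by
  rcases lt_or_gt_of_ne h with h | h
  · exact Iv_orthog (lt_of_le_of_lt (natDegree_Leg j) h)
  · rw [mul_comm]
    exact Iv_orthog (lt_of_le_of_lt (natDegree_Leg k) h)

lemma sum_odd (m : ℕ) : ∑ k ∈ Finset.range (m+1), (2*(k:ℝ)+1) = ((m:ℝ)+1)^2 := by
  induction m with
  | zero => simp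
  | succ m ih =>
    rw [Finset.sum_range_succ, ih]
    push_cast
    ring

lemma christoffel {m : ℕ} {p : ℝ[X]} (hp : p.natDegree ≤ m) :
    (p.eval 1)^2 ≤ ((m:ℝ)+1)^2 * Iv (p * p) := by
  obtain ⟨c, hc⟩ := Leg_expand m p hp
  have heval : p.eval 1 = ∑ k ∈ Finset.range (m+1), c k := by
    rw [hc, eval_finset_sum]
    simp [Leg_eval_one]
  have hIv : Iv (p * p) = ∑ k ∈ Finset.range (m+1), (c k)^2 / (2*(k:ℝ)+1) := by
    rw [hc, Finset.sum_mul_sum]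
    rw [Iv_sum]
    rw [Finset.sum_congr rfl (fun j hj => Iv_sum _ _)]
    rw [Finset.sum_congr rfl (fun j hj => Finset.sum_congr rfl (fun k hk => by
      rw [show (C (c j) * Leg j) * (C (c k) * Leg k) = C (c j) * (C (c k) * (Leg j * Leg k)) by ring,
        Iv_smul, Iv_smul]))]
    rw [Finset.sum_congr rfl (fun j hj => Finset.sum_eq_single j
      (fun k hk hkj => by rw [Iv_Leg_mul (Ne.symm hkj), mul_zero, mul_zero])
      (fun hj' => absurd hj hj'.elim))]
    apply Finset.sum_congr rfl
    intro k hk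
    rw [Iv_Leg_sq]
    field_simp
  rw [heval, hIv]
  have hcs := Finset.sum_mul_sq_le_sq_mul_sq (Finset.range (m+1))
    (fun k => Real.sqrt (2*(k:ℝ)+1)) (fun k => c k / Real.sqrt (2*(k:ℝ)+1))
  have hpos : ∀ k : ℕ, (0:ℝ) < 2*(k:ℝ)+1 := fun k => by positivity
  have h1 : ∀ k ∈ Finset.range (m+1), Real.sqrt (2*(k:ℝ)+1) * (c k / Real.sqrt (2*(k:ℝ)+1)) = c k := by
    intro k _
    rw [mul_div_cancel₀]
    exact ne_of_gt (Real.sqrt_pos.mpr (hpos k))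
  have h2 : ∀ k ∈ Finset.range (m+1), (Real.sqrt (2*(k:ℝ)+1))^2 = 2*(k:ℝ)+1 := by
    intro k _
    exact Real.sq_sqrt (le_of_lt (hpos k))
  have h3 : ∀ k ∈ Finset.range (m+1), (c k / Real.sqrt (2*(k:ℝ)+1))^2 = (c k)^2/(2*(k:ℝ)+1) := by
    intro k _
    rw [div_pow, Real.sq_sqrt (le_of_lt (hpos k))]
  rw [Finset.sum_congr rfl h1, Finset.sum_congr rfl h2, Finset.sum_congr rfl h3, sum_odd] at hcs
  exact hcs


def GoodTerm (n : ℕ) (t : ℝ[X]) : Prop :=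
  ∃ g a : ℝ[X], (g = 1 ∨ g = X ∨ g = 1 - X ∨ g = X * (1 - X)) ∧ t = g * a^2 ∧ t.natDegree ≤ n

def InCone (n : ℕ) (p : ℝ[X]) : Prop :=
  ∃ l : Multiset ℝ[X], (∀ t ∈ l, GoodTerm n t) ∧ p = l.sum

lemma GoodTerm.mono {n n' : ℕ} {t : ℝ[X]} (h : GoodTerm n t) (hn : n ≤ n') : GoodTerm n' t := by
  obtain ⟨g, a, hg, ht, hd⟩ := h
  exact ⟨g, a, hg, ht, hd.trans hn⟩

lemma InCone.mono {n n' : ℕ} {p : ℝ[X]} (h : InCone n p) (hn : n ≤ n') : InCone n' p := by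
  obtain ⟨l, hl, hp⟩ := h
  exact ⟨l, fun t ht => (hl t ht).mono hn, hp⟩

lemma InCone.add {n : ℕ} {p q : ℝ[X]} (hp : InCone n p) (hq : InCone n q) : InCone n (p + q) := by
  obtain ⟨l, hl, hps⟩ := hp
  obtain ⟨l', hl', hqs⟩ := hq
  refine ⟨l + l', fun t ht => ?_, by rw [Multiset.sum_add, hps, hqs]⟩
  rcases Multiset.mem_add.mp ht with h | h
  · exact hl t h
  · exact hl' t h

lemma InCone.goodterm {n : ℕ} {t : ℝ[X]} (h : GoodTerm n t) : InCone n t :=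
  ⟨{t}, by simpa using h, by simp⟩

lemma GoodTerm.mul {n₁ n₂ : ℕ} {t₁ t₂ : ℝ[X]} (h₁ : GoodTerm n₁ t₁) (h₂ : GoodTerm n₂ t₂) :
    GoodTerm (n₁ + n₂) (t₁ * t₂) := by
  obtain ⟨g, a, hg, ht, hd⟩ := h₁
  obtain ⟨g', b, hg', ht', hd'⟩ := h₂
  have hdeg : (t₁ * t₂).natDegree ≤ n₁ + n₂ := natDegree_mul_le.trans (add_le_add hd hd')
  subst ht ht'
  rcases hg with rfl | rfl | rfl | rfl <;> rcases hg' with rfl | rfl | rfl | rfl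
  · exact ⟨1, a*b, Or.inl rfl, by ring, hdeg⟩
  · exact ⟨X, a*b, Or.inr (Or.inl rfl), by ring, hdeg⟩
  · exact ⟨1-X, a*b, Or.inr (Or.inr (Or.inl rfl)), by ring, hdeg⟩
  · exact ⟨X*(1-X), a*b, Or.inr (Or.inr (Or.inr rfl)), by ring, hdeg⟩
  · exact ⟨X, a*b, Or.inr (Or.inl rfl), by ring, hdeg⟩
  · exact ⟨1, X*a*b, Or.inl rfl, by ring, hdeg⟩
  · exact ⟨X*(1-X), a*b, Or.inr (Or.inr (Or.inr rfl)), by ring, hdeg⟩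
  · exact ⟨1-X, X*a*b, Or.inr (Or.inr (Or.inl rfl)), by ring, hdeg⟩
  · exact ⟨1-X, a*b, Or.inr (Or.inr (Or.inl rfl)), by ring, hdeg⟩
  · exact ⟨X*(1-X), a*b, Or.inr (Or.inr (Or.inr rfl)), by ring, hdeg⟩
  · exact ⟨1, (1-X)*a*b, Or.inl rfl, by ring, hdeg⟩
  · exact ⟨X, (1-X)*a*b, Or.inr (Or.inl rfl), by ring, hdeg⟩
  · exact ⟨X*(1-X), a*b, Or.inr (Or.inr (Or.inr rfl)), by ring, hdeg⟩
  · exact ⟨1-X, X*a*b, Or.inr (Or.inr (Or.inl rfl)), by ring, hdeg⟩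
  · exact ⟨X, (1-X)*a*b, Or.inr (Or.inl rfl), by ring, hdeg⟩
  · exact ⟨1, X*(1-X)*a*b, Or.inl rfl, by ring, hdeg⟩

lemma InCone.mul {n₁ n₂ : ℕ} {p q : ℝ[X]} (hp : InCone n₁ p) (hq : InCone n₂ q) :
    InCone (n₁ + n₂) (p * q) := by
  obtain ⟨l, hl, rfl⟩ := hp
  obtain ⟨l', hl', rfl⟩ := hq
  refine ⟨l.bind (fun x => l'.map (fun y => x * y)), fun t ht => ?_, ?_⟩
  · rw [Multiset.mem_bind] at ht
    obtain ⟨x, hx, ht⟩ := ht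
    rw [Multiset.mem_map] at ht
    obtain ⟨y, hy, rfl⟩ := ht
    exact (hl x hx).mul (hl' y hy)
  · rw [Multiset.sum_bind]
    have e1 : ∀ x : ℝ[X], (l'.map (fun y => x * y)).sum = x * l'.sum := by
      intro x
      have := Multiset.sum_map_mul_left (a := x) (s := l') (f := id)
      simpa using this
    rw [Multiset.map_congr rfl (fun x _ => e1 x)]
    have := Multiset.sum_map_mul_right (a := l'.sum) (s := l) (f := id)
    simpa using this.symm

lemma inCone_zero (n : ℕ) : InCone n 0 := ⟨0, by simp, by simp⟩

lemma goodterm_const {c : ℝ} (hc : 0 ≤ c) (n : ℕ) : GoodTerm n (C c) := by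
  refine ⟨1, C (Real.sqrt c), Or.inl rfl, ?_, by simp⟩
  rw [one_mul, ← C_pow, Real.sq_sqrt hc]

lemma inCone_const {c : ℝ} (hc : 0 ≤ c) (n : ℕ) : InCone n (C c) :=
  InCone.goodterm (goodterm_const hc n)

lemma goodterm_X {n : ℕ} (hn : 1 ≤ n) : GoodTerm n X := by
  refine ⟨X, 1, Or.inr (Or.inl rfl), by ring, by simpa using hn⟩

lemma goodterm_one_sub_X {n : ℕ} (hn : 1 ≤ n) : GoodTerm n (1 - X) := by
  refine ⟨1-X, 1, Or.inr (Or.inr (Or.inl rfl)), by ring, ?_⟩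
  have : ((1:ℝ[X]) - X).natDegree ≤ 1 := by compute_degree
  omega

lemma inCone_X_sub_C {r : ℝ} (hr : r ≤ 0) {n : ℕ} (hn : 1 ≤ n) : InCone n (X - C r) := by
  have : (X - C r : ℝ[X]) = X + C (-r) := by rw [map_neg]; ring
  rw [this]
  exact (InCone.goodterm (goodterm_X hn)).add (inCone_const (by linarith) n)

lemma inCone_C_sub_X {r : ℝ} (hr : 1 ≤ r) {n : ℕ} (hn : 1 ≤ n) : InCone n (C r - X) := by
  have : (C r - X : ℝ[X]) = (1 - X) + C (r - 1) := by rw [map_sub, map_one]; ring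
  rw [this]
  exact (InCone.goodterm (goodterm_one_sub_X hn)).add (inCone_const (by linarith) n)

lemma eval_nonneg_of_right {q : ℝ[X]} {a b : ℝ} (hab : a < b)
    (h : ∀ s, a < s → s < b → 0 ≤ q.eval s) : 0 ≤ q.eval a := by
  have ht : Filter.Tendsto (fun s => q.eval s) (nhdsWithin a (Set.Ioi a)) (nhds (q.eval a)) :=
    (q.continuous.tendsto a).mono_left nhdsWithin_le_nhds
  refine ge_of_tendsto ht ?_
  filter_upwards [Ioo_mem_nhdsGT_of_mem (Set.mem_Ico.mpr ⟨le_refl a, hab⟩)] with s hs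
  exact h s hs.1 hs.2

lemma eval_nonneg_of_left {q : ℝ[X]} {a b : ℝ} (hab : a < b)
    (h : ∀ s, a < s → s < b → 0 ≤ q.eval s) : 0 ≤ q.eval b := by
  have ht : Filter.Tendsto (fun s => q.eval s) (nhdsWithin b (Set.Iio b)) (nhds (q.eval b)) :=
    (q.continuous.tendsto b).mono_left nhdsWithin_le_nhds
  refine ge_of_tendsto ht ?_
  filter_upwards [Ioo_mem_nhdsLT_of_mem (Set.mem_Ioc.mpr ⟨hab, le_refl b⟩)] with s hs
  exact h s hs.1 hs.2

theorem nonneg_imp_inCone (N : ℕ) : ∀ (p : ℝ[X]), p.natDegree = N →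
    (∀ s ∈ Set.Icc (0:ℝ) 1, 0 ≤ p.eval s) → InCone N p := by
  induction N using Nat.strong_induction_on with
  | _ N ih =>
  intro p hdeg hnn
  rcases Nat.eq_zero_or_pos N with hN | hN
  · subst hN
    have hp : p = C (p.coeff 0) := Polynomial.eq_C_of_natDegree_le_zero (le_of_eq hdeg)
    have h0 : 0 ≤ p.coeff 0 := by
      have := hnn 0 (by simp)
      rwa [hp, eval_C] at this
    rw [hp]
    exact inCone_const h0 0
  -- p is nonconstant, find a complex root
  have hp0 : p ≠ 0 := fun h => by simp [h] at hdeg; omega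
  have hdegpos : 0 < p.degree := by
    rw [Polynomial.degree_eq_natDegree hp0, hdeg]
    exact_mod_cast hN
  have hmapdeg : 0 < (p.map (algebraMap ℝ ℂ)).degree := by
    rwa [Polynomial.degree_map_eq_of_injective (algebraMap ℝ ℂ).injective]
  obtain ⟨z, hz⟩ := Complex.exists_root hmapdeg
  by_cases hzim : z.im = 0
  · -- real root r
    set r := z.re with hr
    have hroot : p.IsRoot r := by
      have hzr : (algebraMap ℝ ℂ) r = z := by
        apply Complex.ext
        · simp [hr]
        · simp [hzim]
      have : Polynomial.eval₂ (algebraMap ℝ ℂ) ((algebraMap ℝ ℂ) r) p = 0 := by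
        rw [Polynomial.eval₂_eq_eval_map, hzr]
        exact hz
      rw [Polynomial.eval₂_at_apply] at this
      have h2 : (algebraMap ℝ ℂ) (p.eval r) = (algebraMap ℝ ℂ) 0 := by simpa using this
      exact (algebraMap ℝ ℂ).injective h2
    rcases lt_trichotomy r 0 with hr0 | hr0 | hr0
    · -- r < 0
      obtain ⟨q, hpq⟩ := dvd_iff_isRoot.mpr hroot
      have hq0 : q ≠ 0 := by rintro rfl; rw [mul_zero] at hpq; exact hp0 hpq
      have hnd : N = 1 + q.natDegree := by
        rw [← hdeg, hpq, natDegree_mul (X_sub_C_ne_zero r) hq0, natDegree_X_sub_C]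
      have hqnn : ∀ s ∈ Set.Icc (0:ℝ) 1, 0 ≤ q.eval s := by
        intro s hs
        have hpos : 0 < s - r := by have := hs.1; linarith
        have := hnn s hs
        rw [hpq, eval_mul, eval_sub, eval_X, eval_C] at this
        nlinarith
      have hqC := ih q.natDegree (by omega) q rfl hqnn
      have hres := (inCone_X_sub_C (le_of_lt hr0) (le_refl 1)).mul hqC
      rw [hnd, hpq]
      exact hres
    · -- r = 0
      obtain ⟨q, hpq⟩ : X ∣ p := by
        have := dvd_iff_isRoot.mpr hroot
        rwa [hr0, map_zero, sub_zero] at this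
      have hq0 : q ≠ 0 := by rintro rfl; rw [mul_zero] at hpq; exact hp0 hpq
      have hnd : N = 1 + q.natDegree := by
        rw [← hdeg, hpq, natDegree_mul X_ne_zero hq0, natDegree_X]
      have hqint : ∀ u, 0 < u → u < 1 → 0 ≤ q.eval u := by
        intro u h0 h1
        have := hnn u ⟨le_of_lt h0, le_of_lt h1⟩
        rw [hpq, eval_mul, eval_X] at this
        nlinarith
      have hqnn : ∀ s ∈ Set.Icc (0:ℝ) 1, 0 ≤ q.eval s := by
        intro s hs
        rcases eq_or_lt_of_le hs.1 with he | hlt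
        · rw [← he]
          exact eval_nonneg_of_right zero_lt_one hqint
        · rcases eq_or_lt_of_le hs.2 with he1 | hlt1
          · rw [he1]
            exact eval_nonneg_of_left zero_lt_one hqint
          · exact hqint s hlt hlt1
      have hqC := ih q.natDegree (by omega) q rfl hqnn
      have hres := (InCone.goodterm (goodterm_X (le_refl 1))).mul hqC
      rw [hnd, hpq]
      exact hres
    · rcases lt_trichotomy r 1 with hr1 | hr1 | hr1
      · -- interior double root
        have hd0 : (derivative p).eval r = 0 := by
          have hlm : IsLocalMin (fun x => p.eval x) r := by
            have hmem : Set.Ioo (0:ℝ) 1 ∈ nhds r := isOpen_Ioo.mem_nhds ⟨hr0, hr1⟩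
            filter_upwards [hmem] with x hx
            have : p.eval r = 0 := hroot
            rw [this]
            exact hnn x ⟨le_of_lt hx.1, le_of_lt hx.2⟩
          have := hlm.deriv_eq_zero
          rwa [Polynomial.deriv] at this
        obtain ⟨h1, hph⟩ := dvd_iff_isRoot.mpr hroot
        have hrooth : h1.IsRoot r := by
          have hderiv : derivative p = h1 + (X - C r) * derivative h1 := by
            rw [hph, derivative_mul]
            simp only [derivative_sub, derivative_X, derivative_C, sub_zero]
            ring
          have := congrArg (eval r) hderiv
          rw [hd0, eval_add, eval_mul, eval_sub, eval_X, eval_C, sub_self, zero_mul, add_zero] at this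
          exact this.symm
        obtain ⟨q, hq⟩ := dvd_iff_isRoot.mpr hrooth
        have hpq : p = (X - C r)^2 * q := by rw [hph, hq]; ring
        have hq0 : q ≠ 0 := by rintro rfl; rw [mul_zero] at hpq; exact hp0 hpq
        have hfd : ((X - C r : ℝ[X])^2).natDegree = 2 := by
          rw [natDegree_pow, natDegree_X_sub_C]
        have hnd : N = 2 + q.natDegree := by
          rw [← hdeg, hpq, natDegree_mul (pow_ne_zero 2 (X_sub_C_ne_zero r)) hq0, hfd]
        have hqint : ∀ u, r < u → u < 1 → 0 ≤ q.eval u := by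
          intro u h0 h1
          have := hnn u ⟨by linarith, le_of_lt h1⟩
          rw [hpq, eval_mul, eval_pow, eval_sub, eval_X, eval_C] at this
          have hne : (u - r) ≠ 0 := by intro h; nlinarith
          have hpos : 0 < (u - r)^2 := lt_of_le_of_ne (sq_nonneg _) (Ne.symm (pow_ne_zero 2 hne))
          nlinarith
        have hqnn : ∀ s ∈ Set.Icc (0:ℝ) 1, 0 ≤ q.eval s := by
          intro s hs
          by_cases hsr : s = r
          · rw [hsr]
            exact eval_nonneg_of_right hr1 hqint
          · have := hnn s hs
            rw [hpq, eval_mul, eval_pow, eval_sub, eval_X, eval_C] at this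
            have hne : (s - r) ≠ 0 := sub_ne_zero.mpr hsr
            have hpos : 0 < (s - r)^2 := lt_of_le_of_ne (sq_nonneg _) (Ne.symm (pow_ne_zero 2 hne))
            nlinarith
        have hqC := ih q.natDegree (by omega) q rfl hqnn
        have hfC : InCone 2 ((X - C r)^2) :=
          InCone.goodterm ⟨1, X - C r, Or.inl rfl, by ring, le_of_eq hfd⟩
        have hres := hfC.mul hqC
        rw [hnd, hpq]
        exact hres
      · -- r = 1
        obtain ⟨h1, hph⟩ := dvd_iff_isRoot.mpr hroot
        have hpq : p = (1 - X) * (-h1) := by rw [hph, hr1, map_one]; ring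
        have hq0 : -h1 ≠ 0 := by
          intro hcon
          rw [hcon, mul_zero] at hpq
          exact hp0 hpq
        have hfd : ((1:ℝ[X]) - X).natDegree = 1 := by compute_degree!
        have hf0 : ((1:ℝ[X]) - X) ≠ 0 := by
          intro hcon
          rw [hcon] at hfd
          simp at hfd
        have hnd : N = 1 + (-h1).natDegree := by
          rw [← hdeg, hpq, natDegree_mul hf0 hq0, hfd]
        have hqint : ∀ u, 0 < u → u < 1 → 0 ≤ (-h1).eval u := by
          intro u h0 h1u
          have := hnn u ⟨le_of_lt h0, le_of_lt h1u⟩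
          rw [hpq, eval_mul, eval_sub, eval_one, eval_X] at this
          nlinarith
        have hqnn : ∀ s ∈ Set.Icc (0:ℝ) 1, 0 ≤ (-h1).eval s := by
          intro s hs
          rcases eq_or_lt_of_le hs.2 with he1 | hlt1
          · rw [he1]
            exact eval_nonneg_of_left zero_lt_one hqint
          · rcases eq_or_lt_of_le hs.1 with he | hlt
            · rw [← he]
              exact eval_nonneg_of_right zero_lt_one hqint
            · exact hqint s hlt hlt1
        have hqC := ih (-h1).natDegree (by omega) (-h1) rfl hqnn
        have hres := (InCone.goodterm (goodterm_one_sub_X (le_refl 1))).mul hqC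
        rw [hnd, hpq]
        exact hres
      · -- r > 1
        obtain ⟨h1, hph⟩ := dvd_iff_isRoot.mpr hroot
        have hpq : p = (C r - X) * (-h1) := by rw [hph]; ring
        have hq0 : -h1 ≠ 0 := by
          intro hcon
          rw [hcon, mul_zero] at hpq
          exact hp0 hpq
        have hfd : ((C r - X : ℝ[X])).natDegree = 1 := by compute_degree!
        have hf0 : ((C r - X:ℝ[X])) ≠ 0 := by
          intro hcon
          rw [hcon] at hfd
          simp at hfd
        have hnd : N = 1 + (-h1).natDegree := by
          rw [← hdeg, hpq, natDegree_mul hf0 hq0, hfd]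
        have hqnn : ∀ s ∈ Set.Icc (0:ℝ) 1, 0 ≤ (-h1).eval s := by
          intro s hs
          have hpos : 0 < r - s := by have := hs.2; linarith
          have := hnn s hs
          rw [hpq, eval_mul, eval_sub, eval_C, eval_X] at this
          nlinarith
        have hqC := ih (-h1).natDegree (by omega) (-h1) rfl hqnn
        have hres := (inCone_C_sub_X (le_of_lt hr1) (le_refl 1)).mul hqC
        rw [hnd, hpq]
        exact hres
  · -- nonreal root, quadratic factor
    set D : ℝ[X] := (X - C z.re)^2 + C (z.im^2) with hDdef
    have hD2 : D = X^2 + (C (-(2*z.re)) * X + C (z.re^2 + z.im^2)) := by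
      rw [hDdef]
      simp only [map_neg, map_mul, map_add, map_pow, map_ofNat]
      ring_nf
    have hDmonic : D.Monic := by
      rw [hD2]
      apply monic_X_pow_add
      apply lt_of_le_of_lt (degree_add_le _ _)
      apply max_lt
      · apply lt_of_le_of_lt (degree_mul_le _ _)
        have h1 : (C (-(2*z.re))).degree ≤ 0 := degree_C_le
        have h2 : (X : ℝ[X]).degree = 1 := degree_X
        rw [h2]
        apply lt_of_le_of_lt (add_le_add h1 (le_refl _))
        norm_num
      · exact lt_of_le_of_lt degree_C_le (by norm_num)
    have hDd : D.natDegree = 2 := by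
      rw [hD2]
      compute_degree!
    have haD : Polynomial.aeval z D = 0 := by
      rw [hDdef]
      simp only [map_add, map_pow, map_sub, aeval_X, aeval_C, Complex.coe_algebraMap]
      have h1 : (z - (z.re:ℂ)) = (z.im:ℂ) * Complex.I := by
        apply Complex.ext <;> simp
      rw [h1, mul_pow, Complex.I_sq]
      ring
    have haP : Polynomial.aeval z p = 0 := by
      rw [Polynomial.aeval_def, Polynomial.eval₂_eq_eval_map]
      exact hz
    have hmod := Polynomial.modByMonic_add_div p D
    have haR : Polynomial.aeval z (p %ₘ D) = 0 := by
      have := congrArg (Polynomial.aeval z) hmod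
      rw [map_add, map_mul, haD, zero_mul, add_zero] at this
      rw [this, haP]
    have hRdeg : (p %ₘ D).natDegree ≤ 1 := by
      have hD1 : D ≠ 1 := by
        intro hcon
        rw [hcon] at hDd
        simp at hDd
      have := Polynomial.natDegree_modByMonic_lt p hDmonic hD1
      omega
    have hR0 : p %ₘ D = 0 := by
      have hform := Polynomial.eq_X_add_C_of_natDegree_le_one hRdeg
      have := congrArg (Polynomial.aeval z) hform
      rw [haR] at this
      simp only [map_add, map_mul, aeval_X, aeval_C] at this
      have him := congrArg Complex.im this.symm
      simp [Complex.add_im, Complex.mul_im] at him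
      rcases him with him | him
      · rw [hform, him]
        have hre := congrArg Complex.re this.symm
        rw [him] at hre
        simp at hre
        rw [hre]
        simp
      · exact absurd him hzim
    have hdvd : D ∣ p := by
      refine ⟨p /ₘ D, ?_⟩
      conv_lhs => rw [← hmod]
      rw [hR0, zero_add]
    obtain ⟨q, hpq⟩ := hdvd
    have hq0 : q ≠ 0 := by rintro rfl; rw [mul_zero] at hpq; exact hp0 hpq
    have hDne : D ≠ 0 := hDmonic.ne_zero
    have hnd : N = 2 + q.natDegree := by
      rw [← hdeg, hpq, natDegree_mul hDne hq0, hDd]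
    have hqnn : ∀ s ∈ Set.Icc (0:ℝ) 1, 0 ≤ q.eval s := by
      intro s hs
      have hDpos : 0 < D.eval s := by
        rw [hDdef]
        simp only [eval_add, eval_pow, eval_sub, eval_X, eval_C]
        have : 0 < z.im^2 := lt_of_le_of_ne (sq_nonneg _) (Ne.symm (pow_ne_zero 2 hzim))
        nlinarith [sq_nonneg (s - z.re)]
      have := hnn s hs
      rw [hpq, eval_mul] at this
      nlinarith
    have hqC := ih q.natDegree (by omega) q rfl hqnn
    have hfC : InCone 2 D := by
      apply InCone.add
      · exact InCone.goodterm ⟨1, X - C z.re, Or.inl rfl, by ring,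
          by rw [natDegree_pow, natDegree_X_sub_C]⟩
      · exact inCone_const (sq_nonneg _) 2
    have hres := hfC.mul hqC
    rw [hnd, hpq]
    exact hres



lemma goodterm_bound {d : ℕ} (hd : 2 ≤ d) (hd_even : Even d) {t : ℝ[X]} (h : GoodTerm d t) :
    (1 / (2*((d:ℝ)^2 - 1))) * t.eval 1 ≤ Iv t := by
  obtain ⟨m, hm⟩ := hd_even
  have hm1 : 1 ≤ m := by omega
  have hm1R : (1:ℝ) ≤ (m:ℝ) := by exact_mod_cast hm1
  have hdR : (d:ℝ) = 2*(m:ℝ) := by rw [hm]; push_cast; ring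
  have hden : (0:ℝ) < 2*((d:ℝ)^2 - 1) := by rw [hdR]; nlinarith
  have hckey : (((m:ℝ))+1)^2 ≤ 2*((d:ℝ)^2-1) := by rw [hdR]; nlinarith
  have hm1sqpos : (0:ℝ) < ((m:ℝ)+1)^2 := by positivity
  obtain ⟨g, a, hg, ht, hdeg⟩ := h
  by_cases ha : a = 0
  · subst ha
    rw [ht]
    simp only [ne_eq, OfNat.ofNat_ne_zero, not_false_eq_true, zero_pow, mul_zero]
    rw [Iv_zero, eval_zero, mul_zero]
  -- key auxiliary: for b with natDegree b ≤ m, c * (b.eval 1)^2 ≤ Iv (b*b)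
  have main : ∀ b : ℝ[X], b.natDegree ≤ m →
      (1 / (2*((d:ℝ)^2 - 1))) * (b.eval 1)^2 ≤ Iv (b * b) := by
    intro b hb
    have hc := christoffel hb
    have h1 : (1 / (2*((d:ℝ)^2 - 1))) * (b.eval 1)^2 ≤ (1/((m:ℝ)+1)^2) * (b.eval 1)^2 := by
      apply mul_le_mul_of_nonneg_right _ (sq_nonneg _)
      rw [div_le_div_iff₀ hden hm1sqpos]
      linarith
    refine h1.trans ?_
    rw [div_mul_eq_mul_div, one_mul, div_le_iff₀ hm1sqpos]
    linarith
  rcases hg with rfl | rfl | rfl | rfl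
  · -- g = 1
    have hb : a.natDegree ≤ m := by
      rw [ht, one_mul, natDegree_pow] at hdeg
      omega
    have := main a hb
    rw [ht, one_mul, eval_pow]
    calc 1/(2*((d:ℝ)^2-1)) * (a.eval 1)^2 ≤ Iv (a*a) := this
    _ = Iv (a^2) := by rw [← pow_two]
  · -- g = X
    have hXa : (X*a : ℝ[X]).natDegree ≤ m := by
      rw [ht, natDegree_mul X_ne_zero (pow_ne_zero 2 ha), natDegree_X, natDegree_pow] at hdeg
      rw [natDegree_mul X_ne_zero ha, natDegree_X]
      omega
    have := main (X*a) hXa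
    have heq : ((X*a:ℝ[X]).eval 1)^2 = (X*a^2 : ℝ[X]).eval 1 := by
      simp only [eval_mul, eval_X, eval_pow]
      ring
    have hIv : Iv ((X*a) * (X*a)) ≤ Iv (X*a^2) := by
      apply Iv_mono
      intro s hs
      simp only [eval_mul, eval_X, eval_pow]
      nlinarith [mul_nonneg (mul_nonneg hs.1 (sub_nonneg.mpr hs.2)) (sq_nonneg (a.eval s))]
    rw [ht]
    rw [heq] at this
    linarith
  · -- g = 1 - X
    rw [ht]
    have he : ((1-X) * a^2 : ℝ[X]).eval 1 = 0 := by simp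
    rw [he, mul_zero]
    apply Iv_nonneg
    intro s hs
    simp only [eval_mul, eval_sub, eval_one, eval_X, eval_pow]
    nlinarith [mul_nonneg (sub_nonneg.mpr hs.2) (sq_nonneg (a.eval s))]
  · -- g = X*(1-X)
    rw [ht]
    have he : (X*(1-X) * a^2 : ℝ[X]).eval 1 = 0 := by simp
    rw [he, mul_zero]
    apply Iv_nonneg
    intro s hs
    simp only [eval_mul, eval_sub, eval_one, eval_X, eval_pow]
    nlinarith [mul_nonneg (mul_nonneg hs.1 (sub_nonneg.mpr hs.2)) (sq_nonneg (a.eval s))]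

lemma cone_bound {d : ℕ} (hd : 2 ≤ d) (hd_even : Even d) {p : ℝ[X]} (h : InCone d p) :
    (1 / (2*((d:ℝ)^2 - 1))) * p.eval 1 ≤ Iv p := by
  obtain ⟨l, hl, rfl⟩ := h
  induction l using Multiset.induction with
  | empty => simp [Iv_zero]
  | cons t l ih =>
    rw [Multiset.sum_cons, Iv_add, eval_add, mul_add]
    have h1 := goodterm_bound hd hd_even (hl t (Multiset.mem_cons_self t l))
    have h2 := ih (fun u hu => hl u (Multiset.mem_cons_of_mem hu))
    linarith

theorem scalar_key {d : ℕ} (hd : 2 ≤ d) (hd_even : Even d) {p : ℝ[X]}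
    (hdeg : p.natDegree ≤ d) (hnn : ∀ s ∈ Set.Icc (0:ℝ) 1, 0 ≤ p.eval s) :
    (1 / (2*((d:ℝ)^2 - 1))) * p.eval 1 ≤ Iv p :=
  cone_bound hd hd_even ((nonneg_imp_inCone p.natDegree p rfl hnn).mono hdeg)



theorem stmt1 (n d : ℕ) (hd_even : Even d) (hd : 2 ≤ d)
    (M : Matrix (Fin n) (Fin n) (Polynomial ℝ))
    (hdeg : ∀ i j, (M i j).natDegree ≤ d)
    (hpsd : ∀ s ∈ Set.Icc (0:ℝ) 1, (M.map (Polynomial.eval s)).PosSemidef) :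
    ((Matrix.of fun i j => ∫ s in (0:ℝ)..1, (M i j).eval s)
      - (1 / (2 * ((d:ℝ)^2 - 1))) • M.map (Polynomial.eval 1)).PosSemidef := by
  have hsymm : ∀ s ∈ Set.Icc (0:ℝ) 1, ∀ i j, (M j i).eval s = (M i j).eval s := by
    intro s hs i j
    have := (hpsd s hs).1
    have h2 := congrFun (congrFun this i) j
    simpa [Matrix.conjTranspose_apply, Matrix.map_apply] using h2
  refine Matrix.PosSemidef.of_dotProduct_mulVec_nonneg ?_ ?_
  · -- Hermitian
    ext i j
    simp only [Matrix.conjTranspose_apply, Matrix.sub_apply, Matrix.smul_apply, Matrix.of_apply,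
      Matrix.map_apply, star_trivial, smul_eq_mul]
    have h1 : (∫ s in (0:ℝ)..1, (M j i).eval s) = ∫ s in (0:ℝ)..1, (M i j).eval s := by
      apply intervalIntegral.integral_congr
      intro s hs
      rw [Set.uIcc_of_le (by norm_num : (0:ℝ) ≤ 1)] at hs
      exact hsymm s hs i j
    rw [h1, hsymm 1 (by norm_num) i j]
  · -- quadratic form
    intro x
    set c : ℝ := 1 / (2 * ((d:ℝ)^2 - 1)) with hc
    set P : ℝ[X] := ∑ i : Fin n, ∑ j : Fin n, C (x i) * C (x j) * M i j with hP
    have hPdeg : P.natDegree ≤ d := by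
      apply natDegree_sum_le_of_forall_le
      intro i _
      apply natDegree_sum_le_of_forall_le
      intro j _
      calc (C (x i) * C (x j) * M i j).natDegree
          ≤ (C (x i) * C (x j)).natDegree + (M i j).natDegree := natDegree_mul_le
        _ ≤ 0 + d := add_le_add (le_of_eq (by rw [← C_mul, natDegree_C])) (hdeg i j)
        _ = d := by omega
    have hPeval : ∀ s : ℝ, P.eval s = ∑ i : Fin n, ∑ j : Fin n, x i * x j * (M i j).eval s := by
      intro s
      rw [hP, eval_finset_sum]
      apply Finset.sum_congr rfl
      intro i _
      rw [eval_finset_sum]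
      apply Finset.sum_congr rfl
      intro j _
      simp
    have hPnn : ∀ s ∈ Set.Icc (0:ℝ) 1, 0 ≤ P.eval s := by
      intro s hs
      have := (hpsd s hs).dotProduct_mulVec_nonneg x
      rw [hPeval]
      refine this.trans_eq (Eq.symm ?_)
      simp only [dotProduct, Matrix.mulVec, star_trivial, Matrix.map_apply]
      refine Finset.sum_congr rfl fun i _ => ?_
      rw [Finset.mul_sum]
      refine Finset.sum_congr rfl fun j _ => ?_
      ring
    have hIvP : Iv P = ∑ i : Fin n, ∑ j : Fin n, x i * x j * Iv (M i j) := by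
      rw [hP, Iv_sum]
      apply Finset.sum_congr rfl
      intro i _
      rw [Iv_sum]
      apply Finset.sum_congr rfl
      intro j _
      rw [← C_mul, Iv_smul]
    have hkey := scalar_key hd hd_even hPdeg hPnn
    rw [hPeval 1, hIvP] at hkey
    simp only [dotProduct, Matrix.mulVec, star_trivial, Matrix.sub_apply,
      Matrix.smul_apply, Matrix.of_apply, Matrix.map_apply, smul_eq_mul]
    have final : (∑ i : Fin n, x i * ∑ j : Fin n,
          ((∫ s in (0:ℝ)..1, (M i j).eval s) - c * (M i j).eval 1) * x j)
        = (∑ i : Fin n, ∑ j : Fin n, x i * x j * Iv (M i j))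
          - c * (∑ i : Fin n, ∑ j : Fin n, x i * x j * (M i j).eval 1) := by
      simp only [Finset.mul_sum, sub_mul, mul_sub, Finset.sum_sub_distrib]
      congr 1
      · refine Finset.sum_congr rfl fun i _ => Finset.sum_congr rfl fun j _ => ?_
        unfold Iv
        ring
      · refine Finset.sum_congr rfl fun i _ => Finset.sum_congr rfl fun j _ => ?_
        ring
    rw [final]
    linarith
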